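/- arXiv:1507.03289 — 2 statements merged into one kernel-verified Lean document; each statement's English description precedes it below -/
import Mathlib

section
/- For every pair of distinct objectives among the four objectives {total arrival time, makespan, total distance, maximum distance}, there exists a solvable MPP instance for which no single solution simultaneously attains the minimum value of both objectives of the pair over all solutions. -/
/-!
Formalization of multi-robot path planning on graphs (MPP).

An MPP instance consists of a connected simple graph `G` on a vertex type `V`,
a finite set of robots (an index type `R`), and injective start/goal
configurations `xI xG : R → V`.  A scheduled path is a map `ℕ → V`.
-/

namespace MPPFormal

variable {V R : Type}

/-- The arrival time of a path `p` with goal `g`: the smallest time `t`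
with `p t = g`. -/
noncomputable def arrivalTime (g : V) (p : ℕ → V) : ℕ := sInf {t | p t = g}

/-- A feasible scheduled path from `s` to `g` in the graph `G`:
it starts at `s`, reaches `g` at some time, stays at `g` forever after the
first time it reaches `g`, and at every time step it either traverses an
edge of `G` or stays put. -/
def FeasiblePath (G : SimpleGraph V) (s g : V) (p : ℕ → V) : Prop :=
  p 0 = s ∧ (∃ t, p t = g) ∧ (∀ t, arrivalTime g p ≤ t → p t = g) ∧
    ∀ t, G.Adj (p t) (p (t + 1)) ∨ p t = p (t + 1)

/-- Two scheduled paths collide if they meet at the same vertex at the same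
time, or if they swap along an edge head-on. -/
def Collide (p q : ℕ → V) : Prop :=
  (∃ t, p t = q t) ∨ ∃ t, p t = q (t + 1) ∧ p (t + 1) = q t ∧ p t ≠ p (t + 1)

/-- The length of a scheduled path: the number of time steps at which it
actually moves. -/
noncomputable def pathLen (p : ℕ → V) : ℕ := Set.ncard {t | p t ≠ p (t + 1)}

/-- A solution to the MPP instance `(G, R, xI, xG)`: a family of pairwise
non-colliding feasible paths, one per robot. -/
def IsSolution (G : SimpleGraph V) (xI xG : R → V) (p : R → ℕ → V) : Prop :=
  (∀ i, FeasiblePath G (xI i) (xG i) (p i)) ∧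
    Pairwise fun i j => ¬ Collide (p i) (p j)

/-- `(G, xI, xG)` together with the robot index type `R` forms an MPP
instance: the graph is connected and the start and goal configurations are
injective. -/
def IsMPPInstance (G : SimpleGraph V) (xI xG : R → V) : Prop :=
  G.Connected ∧ Function.Injective xI ∧ Function.Injective xG

variable [Fintype R]

/-- Total arrival time of a solution. -/
noncomputable def totalTime (xG : R → V) (p : R → ℕ → V) : ℕ :=
  ∑ i, arrivalTime (xG i) (p i)

/-- Makespan (last arrival time) of a solution. -/
noncomputable def makespan (xG : R → V) (p : R → ℕ → V) : ℕ :=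
  Finset.univ.sup fun i => arrivalTime (xG i) (p i)

/-- Total distance traveled in a solution. -/
noncomputable def totalDist (p : R → ℕ → V) : ℕ := ∑ i, pathLen (p i)

/-- Maximum single-robot distance of a solution. -/
noncomputable def maxDist (p : R → ℕ → V) : ℕ :=
  Finset.univ.sup fun i => pathLen (p i)

/-- Minimum total arrival time over all solutions. -/
noncomputable def minTotalTime (G : SimpleGraph V) (xI xG : R → V) : ℕ :=
  sInf {c | ∃ p, IsSolution G xI xG p ∧ totalTime xG p = c}

/-- Minimum makespan over all solutions. -/
noncomputable def minMakespan (G : SimpleGraph V) (xI xG : R → V) : ℕ :=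
  sInf {c | ∃ p, IsSolution G xI xG p ∧ makespan xG p = c}

/-- Minimum total distance over all solutions. -/
noncomputable def minTotalDist (G : SimpleGraph V) (xI xG : R → V) : ℕ :=
  sInf {c | ∃ p, IsSolution G xI xG p ∧ totalDist p = c}

/-- Minimum maximum distance over all solutions. -/
noncomputable def minMaxDist (G : SimpleGraph V) (xI xG : R → V) : ℕ :=
  sInf {c | ∃ p, IsSolution G xI xG p ∧ maxDist p = c}

end MPPFormal

namespace MPPFormal

/-- The four objectives, indexed by `Fin 4`: total arrival time, makespan,
total distance, and maximum distance. -/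
noncomputable def objective {V R : Type} [Fintype R] (a : Fin 4)
    (xG : R → V) (p : R → ℕ → V) : ℕ :=
  if a = 0 then totalTime xG p
  else if a = 1 then makespan xG p
  else if a = 2 then totalDist p
  else maxDist p

/-- The minimum of the `a`-th objective over all solutions. -/
noncomputable def minObjective {V R : Type} [Fintype R] (a : Fin 4)
    (G : SimpleGraph V) (xI xG : R → V) : ℕ :=
  sInf {c | ∃ p, IsSolution G xI xG p ∧ objective a xG p = c}



/-! ### Auxiliary general lemmas -/

section General

variable {G : SimpleGraph V} {s g : V} {p : ℕ → V}

open scoped Classical in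
/-- moves of `p` in the time window `[a, b)`. -/
noncomputable def movesIn (p : ℕ → V) (a b : ℕ) : Finset ℕ :=
  (Finset.Ico a b).filter fun t => p t ≠ p (t + 1)

lemma arrival_mem (hp : FeasiblePath G s g p) : p (arrivalTime g p) = g :=
  Nat.sInf_mem hp.2.1

lemma arrival_lt {t : ℕ} (h : t < arrivalTime g p) : p t ≠ g := fun hc =>
  Nat.notMem_of_lt_sInf h hc

lemma arrival_le (hp : FeasiblePath G s g p) {t : ℕ} (h : arrivalTime g p ≤ t) :
    p t = g := hp.2.2.1 t h

lemma arrival_eq {T : ℕ} (hT : p T = g) (hlt : ∀ t, t < T → p t ≠ g) :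
    arrivalTime g p = T :=
  le_antisymm (Nat.sInf_le hT) (le_csInf ⟨T, hT⟩ (fun t ht => by
    by_contra h; exact hlt t (lt_of_not_ge h) ht))

lemma stepConst {a b : ℕ} (hs : ∀ t, a ≤ t → t < b → p t = p (t + 1)) (hab : a ≤ b) :
    p a = p b := by
  induction b, hab using Nat.le_induction with
  | base => rfl
  | succ n hn ih =>
    rw [ih fun t ht ht' => hs t ht (ht'.trans (Nat.lt_succ_self n))]
    exact hs n hn (Nat.lt_succ_self n)

lemma mem_movesIn_iff {a b t : ℕ} :
    t ∈ movesIn p a b ↔ a ≤ t ∧ t < b ∧ p t ≠ p (t + 1) := by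
  simp [movesIn, Finset.mem_Ico]; tauto

lemma moves_eq_movesIn (hp : FeasiblePath G s g p) :
    {t | p t ≠ p (t + 1)} = ↑(movesIn p 0 (arrivalTime g p)) := by
  ext t
  simp only [Set.mem_setOf_eq, Finset.mem_coe, mem_movesIn_iff, Nat.zero_le, true_and]
  constructor
  · intro h
    refine ⟨?_, h⟩
    by_contra hlt
    push_neg at hlt
    exact h ((arrival_le hp hlt).trans (arrival_le hp (hlt.trans (Nat.le_succ t))).symm)
  · exact fun h => h.2

lemma pathLen_eq (hp : FeasiblePath G s g p) :
    pathLen p = (movesIn p 0 (arrivalTime g p)).card := by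
  rw [pathLen, moves_eq_movesIn hp, Set.ncard_coe_finset]

lemma movesIn_card_le (a b : ℕ) : (movesIn p a b).card ≤ b - a := by
  classical
  calc (movesIn p a b).card ≤ (Finset.Ico a b).card := by
        rw [movesIn]; exact Finset.card_filter_le _ _
    _ = b - a := Nat.card_Ico a b

lemma pathLen_le_arrival (hp : FeasiblePath G s g p) :
    pathLen p ≤ arrivalTime g p := by
  rw [pathLen_eq hp]
  simpa using movesIn_card_le (p := p) 0 (arrivalTime g p)

lemma movesIn_split {a b c : ℕ} (h1 : a ≤ b) (h2 : b ≤ c) :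
    (movesIn p a c).card = (movesIn p a b).card + (movesIn p b c).card := by
  classical
  rw [movesIn, movesIn, movesIn, ← Finset.Ico_union_Ico_eq_Ico h1 h2, Finset.filter_union]
  rw [Finset.card_union_of_disjoint (Finset.disjoint_filter_filter
    (Finset.Ico_disjoint_Ico_consecutive a b c))]

lemma mem_movesIn {a b t : ℕ} (h1 : a ≤ t) (h2 : t < b) (h : p t ≠ p (t + 1)) :
    t ∈ movesIn p a b := mem_movesIn_iff.mpr ⟨h1, h2, h⟩

lemma lipschitz (φ : V → ℕ) (hφ : ∀ u v, G.Adj u v → φ u ≤ φ v + 1)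
    (hstep : ∀ t, G.Adj (p t) (p (t + 1)) ∨ p t = p (t + 1)) {a b : ℕ} (hab : a ≤ b) :
    φ (p a) ≤ φ (p b) + (movesIn p a b).card := by
  classical
  induction b, hab using Nat.le_induction with
  | base => simp [movesIn]
  | succ n hn ih =>
    by_cases hmv : p n = p (n + 1)
    · have hcard : (movesIn p a (n + 1)).card = (movesIn p a n).card := by
        rw [movesIn, movesIn, Nat.Ico_succ_right_eq_insert_Ico hn, Finset.filter_insert,
          if_neg (by simp [hmv])]
      rw [hcard, ← hmv]
      exact ih
    · have hnotmem : n ∉ movesIn p a n := by simp [mem_movesIn_iff]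
      have hcard : (movesIn p a (n + 1)).card = (movesIn p a n).card + 1 := by
        rw [movesIn, movesIn, Nat.Ico_succ_right_eq_insert_Ico hn, Finset.filter_insert,
          if_pos hmv]
        exact Finset.card_insert_of_notMem (by simpa [movesIn] using hnotmem)
      have hadj : G.Adj (p n) (p (n + 1)) := (hstep n).resolve_right hmv
      have := hφ (p n) (p (n + 1)) hadj
      omega

lemma pathLen_lb (φ : V → ℕ) (hφ : ∀ u v, G.Adj u v → φ u ≤ φ v + 1)
    (hp : FeasiblePath G s g p) : φ s ≤ φ g + pathLen p := by
  have := lipschitz φ hφ hp.2.2.2 (Nat.zero_le (arrivalTime g p))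
  rw [hp.1, arrival_mem hp] at this
  rw [pathLen_eq hp]
  exact this

lemma arrival_lb (φ : V → ℕ) (hφ : ∀ u v, G.Adj u v → φ u ≤ φ v + 1)
    (hp : FeasiblePath G s g p) : φ s ≤ φ g + arrivalTime g p :=
  le_trans (pathLen_lb φ hφ hp) (by have := pathLen_le_arrival hp; omega)

lemma arrival_pos (hp : FeasiblePath G s g p) (hne : s ≠ g) :
    1 ≤ arrivalTime g p := by
  rcases Nat.eq_zero_or_pos (arrivalTime g p) with h | h
  · exfalso; apply hne; rw [← hp.1, ← h]; exact arrival_mem hp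
  · exact h

lemma noMoves_const {a b : ℕ} (hab : a ≤ b)
    (h : ∀ t, a ≤ t → t < b → ¬ (p t ≠ p (t + 1))) : p a = p b :=
  stepConst (fun t ht ht' => by have := h t ht ht'; simpa using this) hab

lemma eventually_goal (hp : FeasiblePath G s g p) {t : ℕ}
    (h : ∀ u, t ≤ u → ¬ (p u ≠ p (u + 1))) : p t = g := by
  have : p t = p (max t (arrivalTime g p)) :=
    noMoves_const (le_max_left _ _) (fun u hu _ => h u hu)
  rw [this]; exact arrival_le hp (le_max_right _ _)

lemma moves_finite (hp : FeasiblePath G s g p) : {t | p t ≠ p (t + 1)}.Finite := by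
  rw [moves_eq_movesIn hp]; exact (movesIn p 0 _).finite_toSet

lemma pathLen_pos (hp : FeasiblePath G s g p) (hne : s ≠ g) : 1 ≤ pathLen p := by
  rcases Nat.eq_zero_or_pos (pathLen p) with h | h
  · exfalso
    have hempty : {t | p t ≠ p (t + 1)} = ∅ := by
      rw [← Set.ncard_eq_zero (moves_finite hp)]; exact h
    apply hne
    rw [← hp.1]
    refine eventually_goal hp (fun u _ => ?_)
    intro hc
    exact absurd (hempty ▸ hc : u ∈ (∅ : Set ℕ)) (Set.notMem_empty u)
  · exact h

lemma one_move (hp : FeasiblePath G s g p) (h1 : pathLen p = 1) :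
    ∃ T, (∀ t, t ≤ T → p t = s) ∧ (∀ t, T < t → p t = g) := by
  obtain ⟨T, hT⟩ := Set.ncard_eq_one.mp h1
  have hmove : ∀ t, t ≠ T → p t = p (t + 1) := by
    intro t ht
    by_contra hc
    exact ht (by have : t ∈ ({T} : Set ℕ) := hT ▸ hc; simpa using this)
  refine ⟨T, fun t ht => ?_, fun t ht => ?_⟩
  · rw [← hp.1]
    exact (stepConst (fun u _ hu => hmove u (by omega)) (Nat.zero_le t)).symm
  · refine eventually_goal hp (fun u hu => ?_)
    intro hc
    have : u = T := by have : u ∈ ({T} : Set ℕ) := hT ▸ hc; simpa using this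
    omega

lemma two_moves (hp : FeasiblePath G s g p) (h2 : pathLen p = 2) :
    ∃ z : V, G.Adj s z ∧ G.Adj z g := by
  obtain ⟨t1, t2, hne, hT⟩ := Set.ncard_eq_two.mp h2
  have hmove : ∀ t, t ≠ t1 → t ≠ t2 → p t = p (t + 1) := by
    intro t h1' h2'
    by_contra hc
    have : t ∈ ({t1, t2} : Set ℕ) := hT ▸ hc
    simp at this; tauto
  have hmv1 : p t1 ≠ p (t1 + 1) := by
    have : t1 ∈ ({t1, t2} : Set ℕ) := by simp
    rw [← hT] at this; exact this
  have hmv2 : p t2 ≠ p (t2 + 1) := by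
    have : t2 ∈ ({t1, t2} : Set ℕ) := by simp
    rw [← hT] at this; exact this
  -- wlog t1 < t2
  rcases lt_or_gt_of_ne hne with hlt | hlt
  case _ =>
    refine ⟨p (t1 + 1), ?_, ?_⟩
    · have h0 : p 0 = p t1 := stepConst (fun u _ hu => hmove u (by omega) (by omega)) (Nat.zero_le t1)
      rw [← hp.1, h0]
      exact (hp.2.2.2 t1).resolve_right hmv1
    · have hmid : p (t1 + 1) = p t2 := stepConst (fun u hu hu' => hmove u (by omega) (by omega)) (by omega)
      have hend : p (t2 + 1) = g :=
        eventually_goal hp (fun u hu hc => by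
          have : u ∈ ({t1, t2} : Set ℕ) := hT ▸ hc
          simp at this; omega)
      rw [hmid, ← hend]
      exact (hp.2.2.2 t2).resolve_right hmv2
  case _ =>
    refine ⟨p (t2 + 1), ?_, ?_⟩
    · have h0 : p 0 = p t2 := stepConst (fun u _ hu => hmove u (by omega) (by omega)) (Nat.zero_le t2)
      rw [← hp.1, h0]
      exact (hp.2.2.2 t2).resolve_right hmv2
    · have hmid : p (t2 + 1) = p t1 := stepConst (fun u hu hu' => hmove u (by omega) (by omega)) (by omega)
      have hend : p (t1 + 1) = g :=
        eventually_goal hp (fun u hu hc => by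
          have : u ∈ ({t1, t2} : Set ℕ) := hT ▸ hc
          simp at this; omega)
      rw [hmid, ← hend]
      exact (hp.2.2.2 t1).resolve_right hmv1

lemma collide_symm {p q : ℕ → V} (h : Collide p q) : Collide q p := by
  rcases h with ⟨t, ht⟩ | ⟨t, h1, h2, h3⟩
  · exact Or.inl ⟨t, ht.symm⟩
  · refine Or.inr ⟨t, h2.symm, h1.symm, ?_⟩
    rw [← h2, ← h1]
    exact h3.symm

end General

section FP
variable {v0 v1 v2 v3 v4 v5 : V} {G : SimpleGraph V}

def fp2 (v0 v1 : V) : ℕ → V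
  | 0 => v0
  | _ + 1 => v1

def fp4 (v0 v1 v2 v3 : V) : ℕ → V
  | 0 => v0
  | 1 => v1
  | 2 => v2
  | _ => v3

def fp5 (v0 v1 v2 v3 v4 : V) : ℕ → V
  | 0 => v0
  | 1 => v1
  | 2 => v2
  | 3 => v3
  | _ => v4

def fp6 (v0 v1 v2 v3 v4 v5 : V) : ℕ → V
  | 0 => v0
  | 1 => v1
  | 2 => v2
  | 3 => v3
  | 4 => v4
  | _ => v5

lemma fp2_const : ∀ t, 1 ≤ t → fp2 v0 v1 t = v1 := by
  intro t ht; match t with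
  | n + 1 => rfl

lemma fp4_const : ∀ t, 3 ≤ t → fp4 v0 v1 v2 v3 t = v3 := by
  intro t ht; match t, ht with
  | n + 3, _ => rfl

lemma fp5_const : ∀ t, 4 ≤ t → fp5 v0 v1 v2 v3 v4 t = v4 := by
  intro t ht; match t, ht with
  | n + 4, _ => rfl

lemma fp6_const : ∀ t, 5 ≤ t → fp6 v0 v1 v2 v3 v4 v5 t = v5 := by
  intro t ht; match t, ht with
  | n + 5, _ => rfl

lemma fp2_arrival (h0 : v0 ≠ v1) : arrivalTime v1 (fp2 v0 v1) = 1 :=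
  arrival_eq rfl (by intro t ht; interval_cases t; exact h0)

lemma fp2_feasible (h : G.Adj v0 v1) : FeasiblePath G v0 v1 (fp2 v0 v1) := by
  refine ⟨rfl, ⟨1, rfl⟩, ?_, ?_⟩
  · rw [fp2_arrival h.ne]; exact fp2_const
  · intro t; match t with
    | 0 => exact Or.inl h
    | n + 1 => exact Or.inr rfl

lemma fp4_arrival (h0 : v0 ≠ v3) (h1 : v1 ≠ v3) (h2 : v2 ≠ v3) :
    arrivalTime v3 (fp4 v0 v1 v2 v3) = 3 :=
  arrival_eq rfl (by intro t ht; interval_cases t <;> assumption)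

lemma fp4_feasible (h01 : G.Adj v0 v1 ∨ v0 = v1) (h12 : G.Adj v1 v2 ∨ v1 = v2)
    (h23 : G.Adj v2 v3 ∨ v2 = v3) (h0 : v0 ≠ v3) (h1 : v1 ≠ v3) (h2 : v2 ≠ v3) :
    FeasiblePath G v0 v3 (fp4 v0 v1 v2 v3) := by
  refine ⟨rfl, ⟨3, rfl⟩, ?_, ?_⟩
  · rw [fp4_arrival h0 h1 h2]; exact fp4_const
  · intro t; match t with
    | 0 => exact h01
    | 1 => exact h12
    | 2 => exact h23
    | n + 3 => exact Or.inr rfl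

lemma fp5_arrival (h0 : v0 ≠ v4) (h1 : v1 ≠ v4) (h2 : v2 ≠ v4) (h3 : v3 ≠ v4) :
    arrivalTime v4 (fp5 v0 v1 v2 v3 v4) = 4 :=
  arrival_eq rfl (by intro t ht; interval_cases t <;> assumption)

lemma fp5_feasible (h01 : G.Adj v0 v1 ∨ v0 = v1) (h12 : G.Adj v1 v2 ∨ v1 = v2)
    (h23 : G.Adj v2 v3 ∨ v2 = v3) (h34 : G.Adj v3 v4 ∨ v3 = v4)
    (h0 : v0 ≠ v4) (h1 : v1 ≠ v4) (h2 : v2 ≠ v4) (h3 : v3 ≠ v4) :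
    FeasiblePath G v0 v4 (fp5 v0 v1 v2 v3 v4) := by
  refine ⟨rfl, ⟨4, rfl⟩, ?_, ?_⟩
  · rw [fp5_arrival h0 h1 h2 h3]; exact fp5_const
  · intro t; match t with
    | 0 => exact h01
    | 1 => exact h12
    | 2 => exact h23
    | 3 => exact h34
    | n + 4 => exact Or.inr rfl

lemma fp6_arrival (h0 : v0 ≠ v5) (h1 : v1 ≠ v5) (h2 : v2 ≠ v5) (h3 : v3 ≠ v5)
    (h4 : v4 ≠ v5) : arrivalTime v5 (fp6 v0 v1 v2 v3 v4 v5) = 5 :=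
  arrival_eq rfl (by intro t ht; interval_cases t <;> assumption)

lemma fp6_feasible (h01 : G.Adj v0 v1 ∨ v0 = v1) (h12 : G.Adj v1 v2 ∨ v1 = v2)
    (h23 : G.Adj v2 v3 ∨ v2 = v3) (h34 : G.Adj v3 v4 ∨ v3 = v4)
    (h45 : G.Adj v4 v5 ∨ v4 = v5)
    (h0 : v0 ≠ v5) (h1 : v1 ≠ v5) (h2 : v2 ≠ v5) (h3 : v3 ≠ v5) (h4 : v4 ≠ v5) :
    FeasiblePath G v0 v5 (fp6 v0 v1 v2 v3 v4 v5) := by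
  refine ⟨rfl, ⟨5, rfl⟩, ?_, ?_⟩
  · rw [fp6_arrival h0 h1 h2 h3 h4]; exact fp6_const
  · intro t; match t with
    | 0 => exact h01
    | 1 => exact h12
    | 2 => exact h23
    | 3 => exact h34
    | 4 => exact h45
    | n + 5 => exact Or.inr rfl

lemma pathLen_of_eq_finset (p : ℕ → V) (F : Finset ℕ)
    (h : {t | p t ≠ p (t + 1)} = ↑F) : pathLen p = F.card := by
  rw [pathLen, h, Set.ncard_coe_finset]

lemma fp2_len (h0 : v0 ≠ v1) : pathLen (fp2 v0 v1) = 1 := by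
  apply pathLen_of_eq_finset _ ({0} : Finset ℕ)
  ext t
  match t with
  | 0 => simpa [fp2] using h0
  | n + 1 => simp [fp2]

lemma fp4_len (h0 : v0 ≠ v1) (h1 : v1 ≠ v2) (h2 : v2 ≠ v3) :
    pathLen (fp4 v0 v1 v2 v3) = 3 := by
  apply pathLen_of_eq_finset _ ({0, 1, 2} : Finset ℕ)
  ext t
  match t with
  | 0 => simpa [fp4] using h0
  | 1 => simpa [fp4] using h1
  | 2 => simpa [fp4] using h2
  | n + 3 => simp [fp4]

lemma fp5_len (h0 : v0 ≠ v1) (h1 : v1 ≠ v2) (h2 : v2 ≠ v3) (h3 : v3 ≠ v4) :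
    pathLen (fp5 v0 v1 v2 v3 v4) = 4 := by
  apply pathLen_of_eq_finset _ ({0, 1, 2, 3} : Finset ℕ)
  ext t
  match t with
  | 0 => simpa [fp5] using h0
  | 1 => simpa [fp5] using h1
  | 2 => simpa [fp5] using h2
  | 3 => simpa [fp5] using h3
  | n + 4 => simp [fp5]

lemma fp6_len_wait2 (h0 : v0 = v1) (h1 : v1 = v2) (h2 : v2 ≠ v3) (h3 : v3 ≠ v4)
    (h4 : v4 ≠ v5) : pathLen (fp6 v0 v1 v2 v3 v4 v5) = 3 := by
  apply pathLen_of_eq_finset _ ({2, 3, 4} : Finset ℕ)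
  ext t
  match t with
  | 0 => simpa [fp6] using h0
  | 1 => simpa [fp6] using h1
  | 2 => simpa [fp6] using h2
  | 3 => simpa [fp6] using h3
  | 4 => simpa [fp6] using h4
  | n + 5 => simp [fp6]

lemma notCollide_of (p q : ℕ → V) (N : ℕ)
    (hc1 : ∀ t, N ≤ t → p t = p N) (hc2 : ∀ t, N ≤ t → q t = q N)
    (hmeet : ∀ t, t ≤ N → p t ≠ q t)
    (hswap : ∀ t, t < N → ¬(p t = q (t + 1) ∧ p (t + 1) = q t ∧ p t ≠ p (t + 1))) :
    ¬ Collide p q := by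
  rintro (⟨t, ht⟩ | ⟨t, h1, h2, h3⟩)
  · rcases le_or_gt t N with h | h
    · exact hmeet t h ht
    · rw [hc1 t h.le, hc2 t h.le] at ht
      exact hmeet N le_rfl ht
  · rcases lt_or_ge t N with h | h
    · exact hswap t h ⟨h1, h2, h3⟩
    · exact h3 ((hc1 t h).trans (hc1 (t + 1) (by omega)).symm)

end FP

section Eval
variable {V : Type}
-- evaluation over Fin 2
lemma sup_fin2 (f : Fin 2 → ℕ) : Finset.univ.sup f = max (f 0) (f 1) := by
  rw [show (Finset.univ : Finset (Fin 2)) = {0, 1} by decide, Finset.sup_insert,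
    Finset.sup_singleton]


lemma totalTime_eval (xG : Fin 2 → V) (p : Fin 2 → ℕ → V) :
    totalTime xG p = arrivalTime (xG 0) (p 0) + arrivalTime (xG 1) (p 1) := by
  rw [totalTime, Fin.sum_univ_two]

lemma makespan_eval (xG : Fin 2 → V) (p : Fin 2 → ℕ → V) :
    makespan xG p = max (arrivalTime (xG 0) (p 0)) (arrivalTime (xG 1) (p 1)) :=
  sup_fin2 _

lemma totalDist_eval (p : Fin 2 → ℕ → V) :
    totalDist p = pathLen (p 0) + pathLen (p 1) := by
  rw [totalDist, Fin.sum_univ_two]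

lemma maxDist_eval (p : Fin 2 → ℕ → V) :
    maxDist p = max (pathLen (p 0)) (pathLen (p 1)) := sup_fin2 _


end Eval

/-! ### Instance A: separates (totalTime, makespan), (totalTime, maxDist),
(makespan, totalDist), (totalDist, maxDist).

Vertices `Fin 8`: x=0, a=1, b=2, y=3, c=4, u=5, v=6, w=7.
Edges: x-a, a-b, b-y, a-c, x-u, u-v, v-w, w-y.
Robot 0 : a → b, robot 1 : x → y. -/

namespace IA

abbrev VV : Type := Fin 8

def Elist : List (VV × VV) := [(0,1), (1,2), (2,3), (1,4), (0,5), (5,6), (6,7), (7,3)]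

def G : SimpleGraph VV where
  Adj u v := (u, v) ∈ Elist ∨ (v, u) ∈ Elist
  symm := ⟨fun u v h => h.symm⟩
  loopless := ⟨fun u h => (by decide : ∀ z : VV, ¬((z, z) ∈ Elist ∨ (z, z) ∈ Elist)) u h⟩

instance : DecidableRel G.Adj := fun u v =>
  decidable_of_iff ((u, v) ∈ Elist ∨ (v, u) ∈ Elist) Iff.rfl

def xI : Fin 2 → VV := ![1, 0]
def xG : Fin 2 → VV := ![2, 3]

lemma conn : G.Connected := by
  rw [SimpleGraph.connected_iff]
  refine ⟨fun u v => ?_, ⟨0⟩⟩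
  have r : ∀ z : VV, G.Reachable 0 z := by
    have a1 : G.Reachable 0 1 := SimpleGraph.Adj.reachable (by decide)
    have a2 : G.Reachable 0 2 := a1.trans (SimpleGraph.Adj.reachable (by decide : G.Adj 1 2))
    have a3 : G.Reachable 0 3 := a2.trans (SimpleGraph.Adj.reachable (by decide : G.Adj 2 3))
    have a4 : G.Reachable 0 4 := a1.trans (SimpleGraph.Adj.reachable (by decide : G.Adj 1 4))
    have a5 : G.Reachable 0 5 := SimpleGraph.Adj.reachable (by decide)
    have a6 : G.Reachable 0 6 := a5.trans (SimpleGraph.Adj.reachable (by decide : G.Adj 5 6))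
    have a7 : G.Reachable 0 7 := a6.trans (SimpleGraph.Adj.reachable (by decide : G.Adj 6 7))
    intro z; fin_cases z
    exacts [SimpleGraph.Reachable.refl 0, a1, a2, a3, a4, a5, a6, a7]
  exact (r u).symm.trans (r v)

lemma inst : IsMPPInstance G xI xG :=
  ⟨conn, by decide, by decide⟩

/-- distance to the goal vertex y = 3. -/
def ψ1 : VV → ℕ := ![3, 2, 1, 0, 3, 3, 2, 1]
lemma hψ1 : ∀ u v : VV, G.Adj u v → ψ1 u ≤ ψ1 v + 1 := by decide

/-- distance to the vertex w = 7. -/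
def ψ2 : VV → ℕ := ![3, 3, 2, 1, 4, 2, 1, 0]
lemma hψ2 : ∀ u v : VV, G.Adj u v → ψ2 u ≤ ψ2 v + 1 := by decide

lemma Ny : ∀ z : VV, G.Adj z 3 → z = 2 ∨ z = 7 := by decide
lemma Nb : ∀ z : VV, G.Adj z 2 → z = 1 ∨ z = 3 := by decide
lemma Nx : ∀ z : VV, G.Adj 0 z → z = 1 ∨ z = 5 := by decide
lemma Na : ∀ z : VV, G.Adj 1 z → z = 0 ∨ z = 2 ∨ z = 4 := by decide
lemma noMid : ∀ z : VV, ¬(G.Adj 1 z ∧ G.Adj z 2) := by decide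

section Analysis

variable {p : Fin 2 → ℕ → VV} (hp : IsSolution G xI xG p)

include hp

lemma hf0 : FeasiblePath G 1 2 (p 0) := hp.1 0
lemma hf1 : FeasiblePath G 0 3 (p 1) := hp.1 1
lemma hcol : ¬ Collide (p 0) (p 1) := hp.2 (by decide : (0 : Fin 2) ≠ 1)

lemma LB_A1 : 1 ≤ arrivalTime 2 (p 0) := arrival_pos (hf0 hp) (by decide)
lemma LB_L1 : 1 ≤ pathLen (p 0) := pathLen_pos (hf0 hp) (by decide)

lemma LB_L2 : 3 ≤ pathLen (p 1) := by
  have h := pathLen_lb ψ1 hψ1 (hf1 hp)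
  rw [show ψ1 0 = 3 from rfl, show ψ1 3 = 0 from rfl] at h
  omega

lemma LB_A2 : 3 ≤ arrivalTime 3 (p 1) := by
  have h1 := LB_L2 hp
  have h2 := pathLen_le_arrival (hf1 hp)
  omega

/-- If robot 1 travels distance 3, it is at b = 2 just before arriving. -/
lemma KC (h : pathLen (p 1) = 3) : p 1 (arrivalTime 3 (p 1) - 1) = 2 := by
  set A := arrivalTime 3 (p 1) with hA
  have hA3 : 3 ≤ A := LB_A2 hp
  have hB1 : A - 1 + 1 = A := by omega
  have hword : p 1 A = 3 := arrival_mem (hf1 hp)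
  have hne : p 1 (A - 1) ≠ 3 := arrival_lt (by omega)
  have hstep := (hf1 hp).2.2.2 (A - 1)
  rw [hB1, hword] at hstep
  have hadj := hstep.resolve_right hne
  rcases Ny _ hadj with h2 | h7
  · exact h2
  · exfalso
    have hlip := lipschitz ψ2 hψ2 (hf1 hp).2.2.2 (Nat.zero_le (A - 1))
    rw [(hf1 hp).1, h7, show ψ2 0 = 3 from rfl, show ψ2 7 = 0 from rfl] at hlip
    have hmem : A - 1 ∈ movesIn (p 1) (A - 1) A :=
      mem_movesIn le_rfl (by omega) (by rw [hB1, hword, h7]; decide)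
    have hone : 1 ≤ (movesIn (p 1) (A - 1) A).card :=
      Finset.card_pos.mpr ⟨_, hmem⟩
    have hsplit := movesIn_split (p := p 1) (Nat.zero_le (A - 1)) (by omega : A - 1 ≤ A)
    have hlen := pathLen_eq (hf1 hp)
    rw [← hA] at hlen
    omega

lemma P5 (h1 : arrivalTime 2 (p 0) = 1) (h2 : pathLen (p 1) = 3) : False := by
  have hKC := KC hp h2
  have hA3 : 3 ≤ arrivalTime 3 (p 1) := LB_A2 hp
  have hmeets : p 0 (arrivalTime 3 (p 1) - 1) = 2 :=
    arrival_le (hf0 hp) (by omega)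
  exact hcol hp (Or.inl ⟨_, hmeets.trans hKC.symm⟩)

/-- If robot 1 arrives at time 3, its path is forced: x, a, b, y. -/
lemma KB (h : arrivalTime 3 (p 1) = 3) : p 1 1 = 1 ∧ p 1 2 = 2 := by
  have h3 : p 1 3 = 3 := by have := arrival_mem (hf1 hp); rwa [h] at this
  have hne2 : p 1 2 ≠ 3 := arrival_lt (by omega)
  have hne1 : p 1 1 ≠ 3 := arrival_lt (by omega)
  have step2 := (hf1 hp).2.2.2 2
  rw [show (2 : ℕ) + 1 = 3 from rfl, h3] at step2
  have hadj2 := step2.resolve_right hne2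
  rcases Ny _ hadj2 with hb | hw
  · refine ⟨?_, hb⟩
    have step1 := (hf1 hp).2.2.2 1
    rw [show (1 : ℕ) + 1 = 2 from rfl, hb] at step1
    have step0 := (hf1 hp).2.2.2 0
    rw [show (0 : ℕ) + 1 = 1 from rfl, (hf1 hp).1] at step0
    have m2 : p 1 1 = 1 ∨ p 1 1 = 3 ∨ p 1 1 = 2 := by
      rcases step1 with h' | h'
      · rcases Nb _ h' with h'' | h'' <;> tauto
      · tauto
    have m1 : p 1 1 = 1 ∨ p 1 1 = 5 ∨ p 1 1 = 0 := by
      rcases step0 with h' | h'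
      · rcases Nx _ h' with h'' | h'' <;> tauto
      · exact Or.inr (Or.inr h'.symm)
    rcases m1 with h' | h' | h'
    · exact h'
    · exfalso; rw [h'] at m2; revert m2; decide
    · exfalso; rw [h'] at m2; revert m2; decide
  · exfalso
    have hlip := lipschitz ψ2 hψ2 (hf1 hp).2.2.2 (Nat.zero_le 2)
    rw [(hf1 hp).1, hw, show ψ2 0 = 3 from rfl, show ψ2 7 = 0 from rfl] at hlip
    have := movesIn_card_le (p := p 1) 0 2
    omega

lemma P2 (h1 : arrivalTime 2 (p 0) = 2) (h2 : arrivalTime 3 (p 1) = 3) : False := by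
  obtain ⟨q1, q2⟩ := KB hp h2
  have pm : p 0 2 = 2 := by have := arrival_mem (hf0 hp); rwa [h1] at this
  have pn1 : p 0 1 ≠ 2 := arrival_lt (by omega)
  have step1 := (hf0 hp).2.2.2 1
  rw [show (1 : ℕ) + 1 = 2 from rfl, pm] at step1
  have hadj1 := step1.resolve_right pn1
  have step0 := (hf0 hp).2.2.2 0
  rw [show (0 : ℕ) + 1 = 1 from rfl, (hf0 hp).1] at step0
  have m2 : p 0 1 = 1 ∨ p 0 1 = 3 := Nb _ hadj1
  have m1 : p 0 1 = 0 ∨ p 0 1 = 2 ∨ p 0 1 = 4 ∨ p 0 1 = 1 := by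
    rcases step0 with h' | h'
    · rcases Na _ h' with h'' | h'' <;> tauto
    · exact Or.inr (Or.inr (Or.inr h'.symm))
  have hm : p 0 1 = 1 := by
    rcases m2 with h' | h'
    · exact h'
    · exfalso; rw [h'] at m1; revert m1; decide
  exact hcol hp (Or.inl ⟨1, hm.trans q1.symm⟩)

lemma P3 (h1 : pathLen (p 0) = 1) (h2 : pathLen (p 1) = 3) : False := by
  obtain ⟨T, hTa, hTb⟩ := one_move (hf0 hp) h1
  -- robot 1 is at b = 2 just before arrival
  have hKC := KC hp h2
  have hA3 : 3 ≤ arrivalTime 3 (p 1) := LB_A2 hp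
  set A := arrivalTime 3 (p 1) with hA
  set S : Set ℕ := {t | p 1 t = 2} with hS
  have hSne : S.Nonempty := ⟨A - 1, hKC⟩
  set t1 := sInf S with ht1
  have ht1mem : p 1 t1 = 2 := Nat.sInf_mem hSne
  have ht1le : t1 ≤ A - 1 := Nat.sInf_le hKC
  have ht1pos : 1 ≤ t1 := by
    rcases Nat.eq_zero_or_pos t1 with h | h
    · exfalso
      have := (hf1 hp).1
      rw [h] at ht1mem
      rw [this] at ht1mem
      exact absurd ht1mem (by decide)
    · exact h
  have hC1 : t1 - 1 + 1 = t1 := by omega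
  have hCne : p 1 (t1 - 1) ≠ 2 := fun hc => by
    have : t1 ≤ t1 - 1 := Nat.sInf_le hc
    omega
  have stepC := (hf1 hp).2.2.2 (t1 - 1)
  rw [hC1, ht1mem] at stepC
  have hadjC := stepC.resolve_right hCne
  rcases Nb _ hadjC with ha | hy
  · -- p 1 (t1 - 1) = 1 = a
    rcases le_or_gt (t1 - 1) T with hcase | hcase
    · exact hcol hp (Or.inl ⟨t1 - 1, (hTa _ hcase).trans ha.symm⟩)
    · have hb : p 0 (A - 1) = 2 := hTb _ (by omega)
      exact hcol hp (Or.inl ⟨A - 1, hb.trans hKC.symm⟩)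
  · -- p 1 (t1 - 1) = 3 = y before arrival: contradiction
    exact absurd hy (arrival_lt (by omega))

lemma P4 : pathLen (p 0) ≠ 2 := by
  intro h
  obtain ⟨z, hz1, hz2⟩ := two_moves (hf0 hp) h
  exact noMid z ⟨hz1, hz2⟩

end Analysis

/-! explicit solutions -/

def SA : Fin 2 → ℕ → VV := ![fp2 1 2, fp5 0 5 6 7 3]

lemma SA_nc : ¬ Collide (SA 0) (SA 1) := by
  apply notCollide_of _ _ 4
  · intro t ht
    show fp2 1 2 t = fp2 1 2 4
    rw [fp2_const t (by omega), fp2_const 4 (by omega)]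
  · intro t ht
    show fp5 0 5 6 7 3 t = fp5 0 5 6 7 3 4
    rw [fp5_const t (by omega), fp5_const 4 (by omega)]
  · intro t ht; interval_cases t <;> decide
  · intro t ht; interval_cases t <;> decide

lemma SA_sol : IsSolution G xI xG SA := by
  constructor
  · intro i
    fin_cases i
    · exact fp2_feasible (by decide)
    · exact fp5_feasible (Or.inl (by decide)) (Or.inl (by decide)) (Or.inl (by decide))
        (Or.inl (by decide)) (by decide) (by decide) (by decide) (by decide)
  · intro i j hij
    fin_cases i <;> fin_cases j
    · exact absurd rfl hij
    · exact SA_nc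
    · exact fun h => SA_nc (collide_symm h)
    · exact absurd rfl hij

lemma SA_A1 : arrivalTime (2 : VV) (SA 0) = 1 := fp2_arrival (by decide)
lemma SA_A2 : arrivalTime (3 : VV) (SA 1) =  4 :=
  fp5_arrival (by decide) (by decide) (by decide) (by decide)
lemma SA_L1 : pathLen (SA 0) = 1 := fp2_len (by decide)
lemma SA_L2 : pathLen (SA 1) = 4 :=
  fp5_len (by decide) (by decide) (by decide) (by decide)

def SB : Fin 2 → ℕ → VV := ![fp4 1 4 1 2, fp4 0 1 2 3]

lemma SB_nc : ¬ Collide (SB 0) (SB 1) := by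
  apply notCollide_of _ _ 3
  · intro t ht
    show fp4 1 4 1 2 t = fp4 1 4 1 2 3
    rw [fp4_const t (by omega), fp4_const 3 (by omega)]
  · intro t ht
    show fp4 0 1 2 3 t = fp4 0 1 2 3 3
    rw [fp4_const t (by omega), fp4_const 3 (by omega)]
  · intro t ht; interval_cases t <;> decide
  · intro t ht; interval_cases t <;> decide

lemma SB_sol : IsSolution G xI xG SB := by
  constructor
  · intro i
    fin_cases i
    · exact fp4_feasible (Or.inl (by decide)) (Or.inl (by decide)) (Or.inl (by decide))
        (by decide) (by decide) (by decide)
    · exact fp4_feasible (Or.inl (by decide)) (Or.inl (by decide)) (Or.inl (by decide))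
        (by decide) (by decide) (by decide)
  · intro i j hij
    fin_cases i <;> fin_cases j
    · exact absurd rfl hij
    · exact SB_nc
    · exact fun h => SB_nc (collide_symm h)
    · exact absurd rfl hij

lemma SB_A1 : arrivalTime (2 : VV) (SB 0) = 3 :=
  fp4_arrival (by decide) (by decide) (by decide)
lemma SB_A2 : arrivalTime (3 : VV) (SB 1) = 3 :=
  fp4_arrival (by decide) (by decide) (by decide)
lemma SB_L1 : pathLen (SB 0) = 3 := fp4_len (by decide) (by decide) (by decide)
lemma SB_L2 : pathLen (SB 1) = 3 := fp4_len (by decide) (by decide) (by decide)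

/-! objective values -/

lemma obj0 (xg : Fin 2 → VV) (p : Fin 2 → ℕ → VV) :
    objective 0 xg p = arrivalTime (xg 0) (p 0) + arrivalTime (xg 1) (p 1) := by
  rw [show objective (0 : Fin 4) xg p = totalTime xg p from rfl, totalTime_eval]

lemma obj1 (xg : Fin 2 → VV) (p : Fin 2 → ℕ → VV) :
    objective 1 xg p = max (arrivalTime (xg 0) (p 0)) (arrivalTime (xg 1) (p 1)) := by
  rw [show objective (1 : Fin 4) xg p = makespan xg p from rfl, makespan_eval]

lemma obj2 (xg : Fin 2 → VV) (p : Fin 2 → ℕ → VV) :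
    objective 2 xg p = pathLen (p 0) + pathLen (p 1) := by
  rw [show objective (2 : Fin 4) xg p = totalDist p from rfl, totalDist_eval]

lemma obj3 (xg : Fin 2 → VV) (p : Fin 2 → ℕ → VV) :
    objective 3 xg p = max (pathLen (p 0)) (pathLen (p 1)) := by
  rw [show objective (3 : Fin 4) xg p = maxDist p from rfl, maxDist_eval]

lemma xg0 : xG 0 = 2 := rfl
lemma xg1 : xG 1 = 3 := rfl

lemma min0 : minObjective 0 G xI xG = 5 := by
  apply le_antisymm
  · apply Nat.sInf_le
    exact ⟨SA, SA_sol, by rw [obj0, xg0, xg1, SA_A1, SA_A2]⟩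
  · apply le_csInf
    · exact ⟨5, SA, SA_sol, by rw [obj0, xg0, xg1, SA_A1, SA_A2]⟩
    rintro c ⟨p, hp, rfl⟩
    rw [obj0, xg0, xg1]
    have l1 := LB_A1 hp
    have l2 := LB_A2 hp
    by_contra hlt
    push_neg at hlt
    have e1 : arrivalTime 2 (p 0) = 1 := by omega
    have e2 : arrivalTime 3 (p 1) = 3 := by omega
    have l3 := pathLen_le_arrival (hf1 hp)
    have l4 := LB_L2 hp
    exact P5 hp e1 (by omega)

lemma min1 : minObjective 1 G xI xG = 3 := by
  apply le_antisymm
  · apply Nat.sInf_le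
    exact ⟨SB, SB_sol, by rw [obj1, xg0, xg1, SB_A1, SB_A2]; norm_num⟩
  · apply le_csInf
    · exact ⟨3, SB, SB_sol, by rw [obj1, xg0, xg1, SB_A1, SB_A2]; norm_num⟩
    rintro c ⟨p, hp, rfl⟩
    rw [obj1, xg0, xg1]
    exact le_trans (LB_A2 hp) (le_max_right _ _)

lemma min2 : minObjective 2 G xI xG = 5 := by
  apply le_antisymm
  · apply Nat.sInf_le
    exact ⟨SA, SA_sol, by rw [obj2, SA_L1, SA_L2]⟩
  · apply le_csInf
    · exact ⟨5, SA, SA_sol, by rw [obj2, SA_L1, SA_L2]⟩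
    rintro c ⟨p, hp, rfl⟩
    rw [obj2]
    have l1 := LB_L1 hp
    have l2 := LB_L2 hp
    by_contra hlt
    push_neg at hlt
    exact P3 hp (by omega) (by omega)

lemma min3 : minObjective 3 G xI xG = 3 := by
  apply le_antisymm
  · apply Nat.sInf_le
    exact ⟨SB, SB_sol, by rw [obj3, SB_L1, SB_L2]; norm_num⟩
  · apply le_csInf
    · exact ⟨3, SB, SB_sol, by rw [obj3, SB_L1, SB_L2]; norm_num⟩
    rintro c ⟨p, hp, rfl⟩
    rw [obj3]
    exact le_trans (LB_L2 hp) (le_max_right _ _)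

/-! the four separation results of instance A -/

lemma sep01 : ¬ ∃ p, IsSolution G xI xG p ∧
    objective 0 xG p = minObjective 0 G xI xG ∧
    objective 1 xG p = minObjective 1 G xI xG := by
  rintro ⟨p, hp, h0, h1⟩
  rw [min0, obj0, xg0, xg1] at h0
  rw [min1, obj1, xg0, xg1] at h1
  have hA2 : arrivalTime 3 (p 1) = 3 :=
    le_antisymm (h1 ▸ le_max_right _ _) (LB_A2 hp)
  have hA1 : arrivalTime 2 (p 0) = 2 := by omega
  exact P2 hp hA1 hA2

lemma sep03 : ¬ ∃ p, IsSolution G xI xG p ∧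
    objective 0 xG p = minObjective 0 G xI xG ∧
    objective 3 xG p = minObjective 3 G xI xG := by
  rintro ⟨p, hp, h0, h3⟩
  rw [min0, obj0, xg0, xg1] at h0
  rw [min3, obj3] at h3
  have hL2 : pathLen (p 1) = 3 :=
    le_antisymm (h3 ▸ le_max_right _ _) (LB_L2 hp)
  have l1 := LB_A1 hp
  have l2 := LB_A2 hp
  rcases (by omega : arrivalTime 2 (p 0) = 1 ∨ arrivalTime 2 (p 0) = 2) with h | h
  · exact P5 hp h hL2
  · exact P2 hp h (by omega)

lemma sep12 : ¬ ∃ p, IsSolution G xI xG p ∧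
    objective 1 xG p = minObjective 1 G xI xG ∧
    objective 2 xG p = minObjective 2 G xI xG := by
  rintro ⟨p, hp, h1, h2⟩
  rw [min1, obj1, xg0, xg1] at h1
  rw [min2, obj2] at h2
  have hA2 : arrivalTime 3 (p 1) = 3 :=
    le_antisymm (h1 ▸ le_max_right _ _) (LB_A2 hp)
  have hL2 : pathLen (p 1) = 3 := by
    have := pathLen_le_arrival (hf1 hp)
    have := LB_L2 hp
    omega
  exact P4 hp (by omega)

lemma sep23 : ¬ ∃ p, IsSolution G xI xG p ∧
    objective 2 xG p = minObjective 2 G xI xG ∧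
    objective 3 xG p = minObjective 3 G xI xG := by
  rintro ⟨p, hp, h2, h3⟩
  rw [min2, obj2] at h2
  rw [min3, obj3] at h3
  have hL2 : pathLen (p 1) = 3 :=
    le_antisymm (h3 ▸ le_max_right _ _) (LB_L2 hp)
  exact P4 hp (by omega)

end IA

/-! ### Instance B: separates (totalTime, totalDist) and (makespan, maxDist).

Vertices `Fin 9`: s=0, m1=1, m2=2, g=3, x=4, y=5, a=6, b=7, c=8.
Edges: s-m1, m1-m2, m2-g, x-m2, m1-y, s-a, a-b, b-c, c-g.
Robot 0 : x → y, robot 1 : s → g. -/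

namespace IB

abbrev VV : Type := Fin 9

def Elist : List (VV × VV) :=
  [(0,1), (1,2), (2,3), (4,2), (1,5), (0,6), (6,7), (7,8), (8,3)]

def G : SimpleGraph VV where
  Adj u v := (u, v) ∈ Elist ∨ (v, u) ∈ Elist
  symm := ⟨fun u v h => h.symm⟩
  loopless := ⟨fun u h => (by decide : ∀ z : VV, ¬((z, z) ∈ Elist ∨ (z, z) ∈ Elist)) u h⟩

instance : DecidableRel G.Adj := fun u v =>
  decidable_of_iff ((u, v) ∈ Elist ∨ (v, u) ∈ Elist) Iff.rfl

def xI : Fin 2 → VV := ![4, 0]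
def xG : Fin 2 → VV := ![5, 3]

lemma conn : G.Connected := by
  rw [SimpleGraph.connected_iff]
  refine ⟨fun u v => ?_, ⟨0⟩⟩
  have r : ∀ z : VV, G.Reachable 0 z := by
    have a1 : G.Reachable 0 1 := SimpleGraph.Adj.reachable (by decide)
    have a2 : G.Reachable 0 2 := a1.trans (SimpleGraph.Adj.reachable (by decide : G.Adj 1 2))
    have a3 : G.Reachable 0 3 := a2.trans (SimpleGraph.Adj.reachable (by decide : G.Adj 2 3))
    have a4 : G.Reachable 0 4 := a2.trans (SimpleGraph.Adj.reachable (by decide : G.Adj 2 4))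
    have a5 : G.Reachable 0 5 := a1.trans (SimpleGraph.Adj.reachable (by decide : G.Adj 1 5))
    have a6 : G.Reachable 0 6 := SimpleGraph.Adj.reachable (by decide)
    have a7 : G.Reachable 0 7 := a6.trans (SimpleGraph.Adj.reachable (by decide : G.Adj 6 7))
    have a8 : G.Reachable 0 8 := a7.trans (SimpleGraph.Adj.reachable (by decide : G.Adj 7 8))
    intro z; fin_cases z
    exacts [SimpleGraph.Reachable.refl 0, a1, a2, a3, a4, a5, a6, a7, a8]
  exact (r u).symm.trans (r v)

lemma inst : IsMPPInstance G xI xG :=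
  ⟨conn, by decide, by decide⟩

/-- distance to y = 5. -/
def φ1 : VV → ℕ := ![2, 1, 2, 3, 3, 0, 3, 4, 4]
lemma hφ1 : ∀ u v : VV, G.Adj u v → φ1 u ≤ φ1 v + 1 := by decide

/-- distance to g = 3. -/
def φ2 : VV → ℕ := ![3, 2, 1, 0, 2, 3, 3, 2, 1]
lemma hφ2 : ∀ u v : VV, G.Adj u v → φ2 u ≤ φ2 v + 1 := by decide

/-- distance to c = 8. -/
def φ3 : VV → ℕ := ![3, 3, 2, 1, 3, 4, 2, 1, 0]
lemma hφ3 : ∀ u v : VV, G.Adj u v → φ3 u ≤ φ3 v + 1 := by decide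

lemma Ny : ∀ z : VV, G.Adj z 5 → z = 1 := by decide
lemma Ng : ∀ z : VV, G.Adj z 3 → z = 2 ∨ z = 8 := by decide
lemma Nm1 : ∀ z : VV, G.Adj z 1 → z = 0 ∨ z = 2 ∨ z = 5 := by decide
lemma Nm2 : ∀ z : VV, G.Adj z 2 → z = 1 ∨ z = 3 ∨ z = 4 := by decide
lemma Nc : ∀ z : VV, G.Adj z 8 → z = 7 ∨ z = 3 := by decide
lemma Nx : ∀ z : VV, G.Adj 4 z → z = 2 := by decide
lemma Ns : ∀ z : VV, G.Adj 0 z → z = 1 ∨ z = 6 := by decide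

section Analysis

variable {p : Fin 2 → ℕ → VV} (hp : IsSolution G xI xG p)

include hp

lemma hf0 : FeasiblePath G 4 5 (p 0) := hp.1 0
lemma hf1 : FeasiblePath G 0 3 (p 1) := hp.1 1
lemma hcol : ¬ Collide (p 0) (p 1) := hp.2 (by decide : (0 : Fin 2) ≠ 1)

lemma LB_L0 : 3 ≤ pathLen (p 0) := by
  have h := pathLen_lb φ1 hφ1 (hf0 hp)
  rw [show φ1 4 = 3 from rfl, show φ1 5 = 0 from rfl] at h
  omega

lemma LB_A0 : 3 ≤ arrivalTime 5 (p 0) := by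
  have h1 := LB_L0 hp
  have h2 := pathLen_le_arrival (hf0 hp)
  omega

lemma LB_L1 : 3 ≤ pathLen (p 1) := by
  have h := pathLen_lb φ2 hφ2 (hf1 hp)
  rw [show φ2 0 = 3 from rfl, show φ2 3 = 0 from rfl] at h
  omega

lemma LB_A1 : 3 ≤ arrivalTime 3 (p 1) := by
  have h1 := LB_L1 hp
  have h2 := pathLen_le_arrival (hf1 hp)
  omega

/-- if robot 0 arrives at time 3, its path is forced: x, m2, m1, y. -/
lemma RA (h : arrivalTime 5 (p 0) = 3) : p 0 1 = 2 ∧ p 0 2 = 1 := by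
  have h3 : p 0 3 = 5 := by have := arrival_mem (hf0 hp); rwa [h] at this
  have hn2 : p 0 2 ≠ 5 := arrival_lt (by omega)
  have hn1 : p 0 1 ≠ 5 := arrival_lt (by omega)
  have step2 := (hf0 hp).2.2.2 2
  rw [show (2 : ℕ) + 1 = 3 from rfl, h3] at step2
  have h2 : p 0 2 = 1 := Ny _ (step2.resolve_right hn2)
  refine ⟨?_, h2⟩
  have step1 := (hf0 hp).2.2.2 1
  rw [show (1 : ℕ) + 1 = 2 from rfl, h2] at step1
  have step0 := (hf0 hp).2.2.2 0
  rw [show (0 : ℕ) + 1 = 1 from rfl, (hf0 hp).1] at step0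
  have m1 : p 0 1 = 0 ∨ p 0 1 = 2 ∨ p 0 1 = 5 ∨ p 0 1 = 1 := by
    rcases step1 with h' | h'
    · rcases Nm1 _ h' with h'' | h'' | h'' <;> tauto
    · tauto
  have m0 : p 0 1 = 4 ∨ p 0 1 = 2 := by
    rcases step0 with h' | h'
    · exact Or.inr (Nx _ h')
    · exact Or.inl h'.symm
  rcases m0 with h' | h'
  · exfalso; rw [h'] at m1; revert m1; decide
  · exact h'

/-- if robot 0 arrives at time 4, its path is one of three variants. -/
lemma RB (h : arrivalTime 5 (p 0) = 4) :
    p 0 3 = 1 ∧ ((p 0 1 = 4 ∧ p 0 2 = 2) ∨ (p 0 1 = 2 ∧ p 0 2 = 2) ∨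
      (p 0 1 = 2 ∧ p 0 2 = 1)) := by
  have h4 : p 0 4 = 5 := by have := arrival_mem (hf0 hp); rwa [h] at this
  have hn3 : p 0 3 ≠ 5 := arrival_lt (by omega)
  have hn2 : p 0 2 ≠ 5 := arrival_lt (by omega)
  have hn1 : p 0 1 ≠ 5 := arrival_lt (by omega)
  have step3 := (hf0 hp).2.2.2 3
  rw [show (3 : ℕ) + 1 = 4 from rfl, h4] at step3
  have h3 : p 0 3 = 1 := Ny _ (step3.resolve_right hn3)
  refine ⟨h3, ?_⟩
  have step2 := (hf0 hp).2.2.2 2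
  rw [show (2 : ℕ) + 1 = 3 from rfl, h3] at step2
  have step1 := (hf0 hp).2.2.2 1
  have step0 := (hf0 hp).2.2.2 0
  rw [show (0 : ℕ) + 1 = 1 from rfl, (hf0 hp).1] at step0
  have m0 : p 0 1 = 4 ∨ p 0 1 = 2 := by
    rcases step0 with h' | h'
    · exact Or.inr (Nx _ h')
    · exact Or.inl h'.symm
  have m2 : p 0 2 = 0 ∨ p 0 2 = 2 ∨ p 0 2 = 1 := by
    rcases step2 with h' | h'
    · rcases Nm1 _ h' with h'' | h'' | h''
      · tauto
      · tauto
      · exact absurd h'' hn2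
    · tauto
  rw [show (1 : ℕ) + 1 = 2 from rfl] at step1
  rcases m2 with h2 | h2 | h2
  · -- p 0 2 = 0 : impossible
    exfalso
    rw [h2] at step1
    have m1 : p 0 1 = 1 ∨ p 0 1 = 6 ∨ p 0 1 = 0 := by
      rcases step1 with h' | h'
      · rcases Ns _ (G.adj_symm h') with h'' | h'' <;> tauto
      · tauto
    rcases m0 with h' | h' <;> rw [h'] at m1 <;> revert m1 <;> decide
  · -- p 0 2 = 2
    rw [h2] at step1
    have m1 : p 0 1 = 1 ∨ p 0 1 = 3 ∨ p 0 1 = 4 ∨ p 0 1 = 2 := by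
      rcases step1 with h' | h'
      · rcases Nm2 _ h' with h'' | h'' | h'' <;> tauto
      · tauto
    rcases m0 with h' | h'
    · exact Or.inl ⟨h', h2⟩
    · exact Or.inr (Or.inl ⟨h', h2⟩)
  · -- p 0 2 = 1
    rw [h2] at step1
    have m1 : p 0 1 = 0 ∨ p 0 1 = 2 ∨ p 0 1 = 5 ∨ p 0 1 = 1 := by
      rcases step1 with h' | h'
      · rcases Nm1 _ h' with h'' | h'' | h'' <;> tauto
      · tauto
    rcases m0 with h' | h'
    · exfalso; rw [h'] at m1; revert m1; decide
    · exact Or.inr (Or.inr ⟨h', h2⟩)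

/-- if robot 1 arrives at time 3, its path is forced: s, m1, m2, g. -/
lemma SC (h : arrivalTime 3 (p 1) = 3) : p 1 1 = 1 ∧ p 1 2 = 2 := by
  have h3 : p 1 3 = 3 := by have := arrival_mem (hf1 hp); rwa [h] at this
  have hn2 : p 1 2 ≠ 3 := arrival_lt (by omega)
  have hn1 : p 1 1 ≠ 3 := arrival_lt (by omega)
  have step2 := (hf1 hp).2.2.2 2
  rw [show (2 : ℕ) + 1 = 3 from rfl, h3] at step2
  have step1 := (hf1 hp).2.2.2 1
  have step0 := (hf1 hp).2.2.2 0
  rw [show (0 : ℕ) + 1 = 1 from rfl, (hf1 hp).1] at step0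
  have m0 : p 1 1 = 1 ∨ p 1 1 = 6 ∨ p 1 1 = 0 := by
    rcases step0 with h' | h'
    · rcases Ns _ h' with h'' | h'' <;> tauto
    · tauto
  have m2 : p 1 2 = 2 ∨ p 1 2 = 8 := Ng _ (step2.resolve_right hn2)
  rw [show (1 : ℕ) + 1 = 2 from rfl] at step1
  rcases m2 with h2 | h2
  · rw [h2] at step1
    have m1 : p 1 1 = 1 ∨ p 1 1 = 3 ∨ p 1 1 = 4 ∨ p 1 1 = 2 := by
      rcases step1 with h' | h'
      · rcases Nm2 _ h' with h'' | h'' | h'' <;> tauto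
      · tauto
    rcases m0 with h' | h' | h'
    · exact ⟨h', h2⟩
    · exfalso; rw [h'] at m1; revert m1; decide
    · exfalso; rw [h'] at m1; revert m1; decide
  · exfalso
    rw [h2] at step1
    have m1 : p 1 1 = 7 ∨ p 1 1 = 3 ∨ p 1 1 = 8 := by
      rcases step1 with h' | h'
      · rcases Nc _ h' with h'' | h'' <;> tauto
      · tauto
    rcases m0 with h' | h' | h' <;> rw [h'] at m1 <;> revert m1 <;> decide

set_option maxHeartbeats 1000000 in
/-- if robot 1 arrives at time 4 with distance 3, its path is one of three
variants, all going through the corridor. -/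
lemma SD (h : arrivalTime 3 (p 1) = 4) (hl : pathLen (p 1) = 3) :
    p 1 3 = 2 ∧ ((p 1 1 = 0 ∧ p 1 2 = 1) ∨ (p 1 1 = 1 ∧ p 1 2 = 1) ∨
      (p 1 1 = 1 ∧ p 1 2 = 2)) := by
  have h4 : p 1 4 = 3 := by have := arrival_mem (hf1 hp); rwa [h] at this
  have hn3 : p 1 3 ≠ 3 := arrival_lt (by omega)
  have hn2 : p 1 2 ≠ 3 := arrival_lt (by omega)
  have hn1 : p 1 1 ≠ 3 := arrival_lt (by omega)
  have step3 := (hf1 hp).2.2.2 3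
  rw [show (3 : ℕ) + 1 = 4 from rfl, h4] at step3
  have m3 : p 1 3 = 2 ∨ p 1 3 = 8 := Ng _ (step3.resolve_right hn3)
  have h3 : p 1 3 = 2 := by
    rcases m3 with h' | h'
    · exact h'
    · exfalso
      -- going through c needs at least 4 moves
      have hlip := lipschitz φ3 hφ3 (hf1 hp).2.2.2 (Nat.zero_le 3)
      rw [(hf1 hp).1, h', show φ3 0 = 3 from rfl, show φ3 8 = 0 from rfl] at hlip
      have hmem : 3 ∈ movesIn (p 1) 3 4 :=
        mem_movesIn le_rfl (by omega) (by rw [show (3:ℕ)+1 = 4 from rfl, h4, h']; decide)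
      have hone : 1 ≤ (movesIn (p 1) 3 4).card := Finset.card_pos.mpr ⟨_, hmem⟩
      have hsplit := movesIn_split (p := p 1) (Nat.zero_le 3) (by omega : 3 ≤ 4)
      have hlen := pathLen_eq (hf1 hp)
      rw [h] at hlen
      omega
  refine ⟨h3, ?_⟩
  have step2 := (hf1 hp).2.2.2 2
  rw [show (2 : ℕ) + 1 = 3 from rfl, h3] at step2
  have step1 := (hf1 hp).2.2.2 1
  have step0 := (hf1 hp).2.2.2 0
  rw [show (0 : ℕ) + 1 = 1 from rfl, (hf1 hp).1] at step0
  have m0 : p 1 1 = 1 ∨ p 1 1 = 6 ∨ p 1 1 = 0 := by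
    rcases step0 with h' | h'
    · rcases Ns _ h' with h'' | h'' <;> tauto
    · tauto
  have m2 : p 1 2 = 1 ∨ p 1 2 = 4 ∨ p 1 2 = 2 := by
    rcases step2 with h' | h'
    · rcases Nm2 _ h' with h'' | h'' | h''
      · tauto
      · exact absurd h'' hn2
      · tauto
    · tauto
  rw [show (1 : ℕ) + 1 = 2 from rfl] at step1
  rcases m2 with h2 | h2 | h2
  · -- p 1 2 = 1
    rw [h2] at step1
    have m1 : p 1 1 = 0 ∨ p 1 1 = 2 ∨ p 1 1 = 5 ∨ p 1 1 = 1 := by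
      rcases step1 with h' | h'
      · rcases Nm1 _ h' with h'' | h'' | h'' <;> tauto
      · tauto
    rcases m0 with h' | h' | h'
    · exact Or.inr (Or.inl ⟨h', h2⟩)
    · exfalso; rw [h'] at m1; revert m1; decide
    · exact Or.inl ⟨h', h2⟩
  · -- p 1 2 = 4 : impossible
    exfalso
    rw [h2] at step1
    have m1 : p 1 1 = 2 ∨ p 1 1 = 4 := by
      rcases step1 with h' | h'
      · exact Or.inl (Nx _ (G.adj_symm h'))
      · tauto
    rcases m0 with h' | h' | h' <;> rw [h'] at m1 <;> revert m1 <;> decide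
  · -- p 1 2 = 2
    rw [h2] at step1
    have m1 : p 1 1 = 1 ∨ p 1 1 = 3 ∨ p 1 1 = 4 ∨ p 1 1 = 2 := by
      rcases step1 with h' | h'
      · rcases Nm2 _ h' with h'' | h'' | h'' <;> tauto
      · tauto
    rcases m0 with h' | h' | h'
    · exact Or.inr (Or.inr ⟨h', h2⟩)
    · exfalso; rw [h'] at m1; revert m1; decide
    · exfalso; rw [h'] at m1; revert m1; decide

lemma Q1 (h0 : arrivalTime 5 (p 0) = 3) (h1 : arrivalTime 3 (p 1) = 3) : False := by
  obtain ⟨r1, r2⟩ := RA hp h0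
  obtain ⟨s1, s2⟩ := SC hp h1
  exact hcol hp (Or.inr ⟨1, by rw [r1, s2], by rw [r2, s1], by rw [r1, r2]; decide⟩)

lemma Q2 (h0 : arrivalTime 5 (p 0) = 3) (h1 : arrivalTime 3 (p 1) = 4)
    (hl : pathLen (p 1) = 3) : False := by
  obtain ⟨r1, r2⟩ := RA hp h0
  obtain ⟨w3, hw⟩ := SD hp h1 hl
  rcases hw with ⟨s1, s2⟩ | ⟨s1, s2⟩ | ⟨s1, s2⟩
  · exact hcol hp (Or.inl ⟨2, by rw [r2, s2]⟩)
  · exact hcol hp (Or.inl ⟨2, by rw [r2, s2]⟩)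
  · exact hcol hp (Or.inr ⟨1, by rw [r1, s2], by rw [r2, s1], by rw [r1, r2]; decide⟩)

lemma Q3 (h0 : arrivalTime 5 (p 0) = 4) (h1 : arrivalTime 3 (p 1) = 3) : False := by
  obtain ⟨r3, hr⟩ := RB hp h0
  obtain ⟨s1, s2⟩ := SC hp h1
  rcases hr with ⟨r1, r2⟩ | ⟨r1, r2⟩ | ⟨r1, r2⟩
  · exact hcol hp (Or.inl ⟨2, by rw [r2, s2]⟩)
  · exact hcol hp (Or.inl ⟨2, by rw [r2, s2]⟩)
  · exact hcol hp (Or.inr ⟨1, by rw [r1, s2], by rw [r2, s1], by rw [r1, r2]; decide⟩)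

lemma Q4 (h0 : arrivalTime 5 (p 0) = 4) (h1 : arrivalTime 3 (p 1) = 4)
    (hl : pathLen (p 1) = 3) : False := by
  obtain ⟨r3, hr⟩ := RB hp h0
  obtain ⟨w3, hw⟩ := SD hp h1 hl
  rcases hr with ⟨r1, r2⟩ | ⟨r1, r2⟩ | ⟨r1, r2⟩ <;>
    rcases hw with ⟨s1, s2⟩ | ⟨s1, s2⟩ | ⟨s1, s2⟩
  · exact hcol hp (Or.inr ⟨2, by rw [r2, w3], by rw [r3, s2], by rw [r2, r3]; decide⟩)
  · exact hcol hp (Or.inr ⟨2, by rw [r2, w3], by rw [r3, s2], by rw [r2, r3]; decide⟩)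
  · exact hcol hp (Or.inl ⟨2, by rw [r2, s2]⟩)
  · exact hcol hp (Or.inr ⟨2, by rw [r2, w3], by rw [r3, s2], by rw [r2, r3]; decide⟩)
  · exact hcol hp (Or.inr ⟨2, by rw [r2, w3], by rw [r3, s2], by rw [r2, r3]; decide⟩)
  · exact hcol hp (Or.inl ⟨2, by rw [r2, s2]⟩)
  · exact hcol hp (Or.inl ⟨2, by rw [r2, s2]⟩)
  · exact hcol hp (Or.inl ⟨2, by rw [r2, s2]⟩)
  · exact hcol hp (Or.inr ⟨1, by rw [r1, s2], by rw [r2, s1], by rw [r1, r2]; decide⟩)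

end Analysis

/-! explicit solutions -/

def SA : Fin 2 → ℕ → VV := ![fp4 4 2 1 5, fp6 0 0 0 1 2 3]

lemma SA_nc : ¬ Collide (SA 0) (SA 1) := by
  apply notCollide_of _ _ 5
  · intro t ht
    show fp4 4 2 1 5 t = fp4 4 2 1 5 5
    rw [fp4_const t (by omega), fp4_const 5 (by omega)]
  · intro t ht
    show fp6 0 0 0 1 2 3 t = fp6 0 0 0 1 2 3 5
    rw [fp6_const t (by omega), fp6_const 5 (by omega)]
  · intro t ht; interval_cases t <;> decide
  · intro t ht; interval_cases t <;> decide

lemma SA_sol : IsSolution G xI xG SA := by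
  constructor
  · intro i
    fin_cases i
    · exact fp4_feasible (Or.inl (by decide)) (Or.inl (by decide)) (Or.inl (by decide))
        (by decide) (by decide) (by decide)
    · exact fp6_feasible (Or.inr (by decide)) (Or.inr (by decide)) (Or.inl (by decide))
        (Or.inl (by decide)) (Or.inl (by decide))
        (by decide) (by decide) (by decide) (by decide) (by decide)
  · intro i j hij
    fin_cases i <;> fin_cases j
    · exact absurd rfl hij
    · exact SA_nc
    · exact fun h => SA_nc (collide_symm h)
    · exact absurd rfl hij

lemma SA_A0 : arrivalTime (5 : VV) (SA 0) = 3 :=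
  fp4_arrival (by decide) (by decide) (by decide)
lemma SA_A1 : arrivalTime (3 : VV) (SA 1) = 5 :=
  fp6_arrival (by decide) (by decide) (by decide) (by decide) (by decide)
lemma SA_L0 : pathLen (SA 0) = 3 := fp4_len (by decide) (by decide) (by decide)
lemma SA_L1 : pathLen (SA 1) = 3 :=
  fp6_len_wait2 (by decide) (by decide) (by decide) (by decide) (by decide)

def SB : Fin 2 → ℕ → VV := ![fp4 4 2 1 5, fp5 0 6 7 8 3]

lemma SB_nc : ¬ Collide (SB 0) (SB 1) := by
  apply notCollide_of _ _ 4
  · intro t ht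
    show fp4 4 2 1 5 t = fp4 4 2 1 5 4
    rw [fp4_const t (by omega), fp4_const 4 (by omega)]
  · intro t ht
    show fp5 0 6 7 8 3 t = fp5 0 6 7 8 3 4
    rw [fp5_const t (by omega), fp5_const 4 (by omega)]
  · intro t ht; interval_cases t <;> decide
  · intro t ht; interval_cases t <;> decide

lemma SB_sol : IsSolution G xI xG SB := by
  constructor
  · intro i
    fin_cases i
    · exact fp4_feasible (Or.inl (by decide)) (Or.inl (by decide)) (Or.inl (by decide))
        (by decide) (by decide) (by decide)
    · exact fp5_feasible (Or.inl (by decide)) (Or.inl (by decide)) (Or.inl (by decide))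
        (Or.inl (by decide)) (by decide) (by decide) (by decide) (by decide)
  · intro i j hij
    fin_cases i <;> fin_cases j
    · exact absurd rfl hij
    · exact SB_nc
    · exact fun h => SB_nc (collide_symm h)
    · exact absurd rfl hij

lemma SB_A0 : arrivalTime (5 : VV) (SB 0) = 3 :=
  fp4_arrival (by decide) (by decide) (by decide)
lemma SB_A1 : arrivalTime (3 : VV) (SB 1) = 4 :=
  fp5_arrival (by decide) (by decide) (by decide) (by decide)
lemma SB_L0 : pathLen (SB 0) = 3 := fp4_len (by decide) (by decide) (by decide)
lemma SB_L1 : pathLen (SB 1) = 4 :=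
  fp5_len (by decide) (by decide) (by decide) (by decide)

/-! objective values -/

lemma obj0 (xg : Fin 2 → VV) (p : Fin 2 → ℕ → VV) :
    objective 0 xg p = arrivalTime (xg 0) (p 0) + arrivalTime (xg 1) (p 1) := by
  rw [show objective (0 : Fin 4) xg p = totalTime xg p from rfl, totalTime_eval]

lemma obj1 (xg : Fin 2 → VV) (p : Fin 2 → ℕ → VV) :
    objective 1 xg p = max (arrivalTime (xg 0) (p 0)) (arrivalTime (xg 1) (p 1)) := by
  rw [show objective (1 : Fin 4) xg p = makespan xg p from rfl, makespan_eval]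

lemma obj2 (xg : Fin 2 → VV) (p : Fin 2 → ℕ → VV) :
    objective 2 xg p = pathLen (p 0) + pathLen (p 1) := by
  rw [show objective (2 : Fin 4) xg p = totalDist p from rfl, totalDist_eval]

lemma obj3 (xg : Fin 2 → VV) (p : Fin 2 → ℕ → VV) :
    objective 3 xg p = max (pathLen (p 0)) (pathLen (p 1)) := by
  rw [show objective (3 : Fin 4) xg p = maxDist p from rfl, maxDist_eval]

lemma xg0 : xG 0 = 5 := rfl
lemma xg1 : xG 1 = 3 := rfl

lemma min0 : minObjective 0 G xI xG = 7 := by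
  apply le_antisymm
  · apply Nat.sInf_le
    exact ⟨SB, SB_sol, by rw [obj0, xg0, xg1, SB_A0, SB_A1]⟩
  · apply le_csInf
    · exact ⟨7, SB, SB_sol, by rw [obj0, xg0, xg1, SB_A0, SB_A1]⟩
    rintro c ⟨p, hp, rfl⟩
    rw [obj0, xg0, xg1]
    have l1 := LB_A0 hp
    have l2 := LB_A1 hp
    by_contra hlt
    push_neg at hlt
    exact Q1 hp (by omega) (by omega)

lemma min1 : minObjective 1 G xI xG = 4 := by
  apply le_antisymm
  · apply Nat.sInf_le
    exact ⟨SB, SB_sol, by rw [obj1, xg0, xg1, SB_A0, SB_A1]; norm_num⟩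
  · apply le_csInf
    · exact ⟨4, SB, SB_sol, by rw [obj1, xg0, xg1, SB_A0, SB_A1]; norm_num⟩
    rintro c ⟨p, hp, rfl⟩
    rw [obj1, xg0, xg1]
    have l1 := LB_A0 hp
    have l2 := LB_A1 hp
    by_contra hlt
    push_neg at hlt
    have e0 : arrivalTime 5 (p 0) = 3 := by omega
    have e1 : arrivalTime 3 (p 1) = 3 := by
      have := le_max_right (arrivalTime 5 (p 0)) (arrivalTime 3 (p 1))
      omega
    exact Q1 hp e0 e1

lemma min2 : minObjective 2 G xI xG = 6 := by
  apply le_antisymm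
  · apply Nat.sInf_le
    exact ⟨SA, SA_sol, by rw [obj2, SA_L0, SA_L1]⟩
  · apply le_csInf
    · exact ⟨6, SA, SA_sol, by rw [obj2, SA_L0, SA_L1]⟩
    rintro c ⟨p, hp, rfl⟩
    rw [obj2]
    have l1 := LB_L0 hp
    have l2 := LB_L1 hp
    omega

lemma min3 : minObjective 3 G xI xG = 3 := by
  apply le_antisymm
  · apply Nat.sInf_le
    exact ⟨SA, SA_sol, by rw [obj3, SA_L0, SA_L1]; norm_num⟩
  · apply le_csInf
    · exact ⟨3, SA, SA_sol, by rw [obj3, SA_L0, SA_L1]; norm_num⟩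
    rintro c ⟨p, hp, rfl⟩
    rw [obj3]
    exact le_trans (LB_L1 hp) (le_max_right _ _)

/-! the two separation results of instance B -/

lemma sep02 : ¬ ∃ p, IsSolution G xI xG p ∧
    objective 0 xG p = minObjective 0 G xI xG ∧
    objective 2 xG p = minObjective 2 G xI xG := by
  rintro ⟨p, hp, h0, h2⟩
  rw [min0, obj0, xg0, xg1] at h0
  rw [min2, obj2] at h2
  have l0 := LB_L0 hp
  have l1 := LB_L1 hp
  have hL1 : pathLen (p 1) = 3 := by omega
  have a0 := LB_A0 hp
  have a1 := LB_A1 hp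
  rcases (by omega : arrivalTime 5 (p 0) = 3 ∨ arrivalTime 5 (p 0) = 4) with h | h
  · exact Q2 hp h (by omega) hL1
  · exact Q3 hp h (by omega)

lemma sep13 : ¬ ∃ p, IsSolution G xI xG p ∧
    objective 1 xG p = minObjective 1 G xI xG ∧
    objective 3 xG p = minObjective 3 G xI xG := by
  rintro ⟨p, hp, h1, h3⟩
  rw [min1, obj1, xg0, xg1] at h1
  rw [min3, obj3] at h3
  have hL1 : pathLen (p 1) = 3 :=
    le_antisymm (h3 ▸ le_max_right _ _) (LB_L1 hp)
  have a0 := LB_A0 hp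
  have a1 := LB_A1 hp
  have b0 : arrivalTime 5 (p 0) ≤ 4 := h1 ▸ le_max_left _ _
  have b1 : arrivalTime 3 (p 1) ≤ 4 := h1 ▸ le_max_right _ _
  rcases (by omega : arrivalTime 5 (p 0) = 3 ∨ arrivalTime 5 (p 0) = 4) with h | h <;>
    rcases (by omega : arrivalTime 3 (p 1) = 3 ∨ arrivalTime 3 (p 1) = 4) with h' | h'
  · exact Q1 hp h h'
  · exact Q2 hp h h' hL1
  · exact Q3 hp h h'
  · exact Q4 hp h h' hL1

end IB

-- INSTANCE_SECTIONS3 --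

/-- For every pair of distinct objectives among the four objectives, there is
a solvable MPP instance for which no single solution simultaneously attains
the minimum value of both objectives of the pair. -/
theorem pareto_all_pairs :
    ∀ a b : Fin 4, a ≠ b →
      ∃ (k : ℕ) (V : Type) (G : SimpleGraph V) (xI xG : Fin k → V),
        IsMPPInstance G xI xG ∧ (∃ p, IsSolution G xI xG p) ∧
        ¬ ∃ p, IsSolution G xI xG p ∧
          objective a xG p = minObjective a G xI xG ∧
          objective b xG p = minObjective b G xI xG := by
  have swap : ∀ {V : Type} (G : SimpleGraph V) (xI xG : Fin 2 → V) (a b : Fin 4),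
      (¬ ∃ p, IsSolution G xI xG p ∧ objective a xG p = minObjective a G xI xG ∧
        objective b xG p = minObjective b G xI xG) →
      ¬ ∃ p, IsSolution G xI xG p ∧ objective b xG p = minObjective b G xI xG ∧
        objective a xG p = minObjective a G xI xG := by
    rintro V G xI xG a b h ⟨p, h1, h2, h3⟩
    exact h ⟨p, h1, h3, h2⟩
  intro a b hab
  fin_cases a <;> fin_cases b
  · exact absurd rfl hab
  · exact ⟨2, IA.VV, IA.G, IA.xI, IA.xG, IA.inst, ⟨IA.SA, IA.SA_sol⟩, IA.sep01⟩
  · exact ⟨2, IB.VV, IB.G, IB.xI, IB.xG, IB.inst, ⟨IB.SA, IB.SA_sol⟩, IB.sep02⟩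
  · exact ⟨2, IA.VV, IA.G, IA.xI, IA.xG, IA.inst, ⟨IA.SA, IA.SA_sol⟩, IA.sep03⟩
  · exact ⟨2, IA.VV, IA.G, IA.xI, IA.xG, IA.inst, ⟨IA.SA, IA.SA_sol⟩,
      swap IA.G IA.xI IA.xG 0 1 IA.sep01⟩
  · exact absurd rfl hab
  · exact ⟨2, IA.VV, IA.G, IA.xI, IA.xG, IA.inst, ⟨IA.SA, IA.SA_sol⟩, IA.sep12⟩
  · exact ⟨2, IB.VV, IB.G, IB.xI, IB.xG, IB.inst, ⟨IB.SA, IB.SA_sol⟩, IB.sep13⟩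
  · exact ⟨2, IB.VV, IB.G, IB.xI, IB.xG, IB.inst, ⟨IB.SA, IB.SA_sol⟩,
      swap IB.G IB.xI IB.xG 0 2 IB.sep02⟩
  · exact ⟨2, IA.VV, IA.G, IA.xI, IA.xG, IA.inst, ⟨IA.SA, IA.SA_sol⟩,
      swap IA.G IA.xI IA.xG 1 2 IA.sep12⟩
  · exact absurd rfl hab
  · exact ⟨2, IA.VV, IA.G, IA.xI, IA.xG, IA.inst, ⟨IA.SA, IA.SA_sol⟩, IA.sep23⟩
  · exact ⟨2, IA.VV, IA.G, IA.xI, IA.xG, IA.inst, ⟨IA.SA, IA.SA_sol⟩,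
      swap IA.G IA.xI IA.xG 0 3 IA.sep03⟩
  · exact ⟨2, IB.VV, IB.G, IB.xI, IB.xG, IB.inst, ⟨IB.SA, IB.SA_sol⟩,
      swap IB.G IB.xI IB.xG 1 3 IB.sep13⟩
  · exact ⟨2, IA.VV, IA.G, IA.xI, IA.xG, IA.inst, ⟨IA.SA, IA.SA_sol⟩,
      swap IA.G IA.xI IA.xG 2 3 IA.sep23⟩
  · exact absurd rfl hab

end MPPFormal
end

section
/- Let (G, R, x_I, x_G) be an MPP instance in which x_I is a bijection from R onto the vertex set V (every vertex is initially occupied), let P = {p_1, …, p_n} be a solution, and let t be any time step. Then the map σ_t : V → V defined by σ_t(p_i(t)) = p_i(t+1) is a well-defined permutation of V, σ_t has no orbit of size 2, and every orbit of σ_t of size at least 3 is the vertex set of a cycle in G traversed by consecutive edges of G; in other words, in a fully occupied graph each synchronous collision-free step consists of synchronized rotations of robots along vertex-disjoint cycles of G, with all non-rotating robots stationary. -/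
namespace MPPFormal

/-- In an MPP instance whose start configuration occupies every vertex
(`xI` is a bijection onto `V`), each synchronous step of a solution is a
permutation `σ` of the vertices (robot at `p i t` moves to `σ (p i t) =
p i (t+1)`), this permutation has no orbit of size `2`, and every vertex
moved by `σ` moves along an edge of `G`; hence every orbit of size at least
`3` is the vertex set of a cycle of `G` traversed along consecutive edges,
i.e. each step consists of synchronized rotations along vertex-disjoint
cycles of `G`, all other robots staying put. -/
theorem fullyOccupied_step_is_cycle_rotation {V R : Type} [Fintype R]
    (G : SimpleGraph V) (xI xG : R → V) (hconn : G.Connected)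
    (hI : Function.Bijective xI) (hG : Function.Injective xG)
    (p : R → ℕ → V) (hp : IsSolution G xI xG p) (t : ℕ) :
    ∃ σ : Equiv.Perm V,
      (∀ i, σ (p i t) = p i (t + 1)) ∧
      (∀ v, σ (σ v) = v → σ v = v) ∧
      ∀ v, σ v ≠ v → G.Adj v (σ v) := by
  classical
  letI : Fintype V := Fintype.ofBijective xI hI
  have hcard : Fintype.card R = Fintype.card V := Fintype.card_of_bijective hI
  have hinj : ∀ s : ℕ, Function.Injective (fun i => p i s) := by
    intro s i j hij
    by_contra hne
    exact hp.2 hne (Or.inl ⟨s, hij⟩)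
  have hbij : ∀ s : ℕ, Function.Bijective (fun i => p i s) := fun s =>
    (Fintype.bijective_iff_injective_and_card _).2 ⟨hinj s, hcard⟩
  let e₁ : R ≃ V := Equiv.ofBijective _ (hbij t)
  let e₂ : R ≃ V := Equiv.ofBijective _ (hbij (t + 1))
  refine ⟨e₁.symm.trans e₂, ?_, ?_, ?_⟩
  · intro i
    have : e₁.symm (p i t) = i := e₁.symm_apply_apply i
    simp [Equiv.trans_apply, this, e₂]
  · intro v hvv
    by_contra hv
    set i := e₁.symm v with hi
    have hvi : p i t = v := e₁.apply_symm_apply v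
    have h1 : p i (t + 1) = e₂ (e₁.symm v) := rfl
    set j := e₁.symm (p i (t + 1)) with hj
    have hjt : p j t = p i (t + 1) := e₁.apply_symm_apply _
    have h2 : p j (t + 1) = v := by
      have : e₂ (e₁.symm (e₂ (e₁.symm v))) = v := hvv
      exact this
    have hne : p i t ≠ p i (t + 1) := by
      intro h; apply hv; rw [Equiv.trans_apply, ← h1, ← h, hvi]
    have hij : i ≠ j := by
      intro h; apply hne; rw [hvi, ← h2, h]
    exact hp.2 hij (Or.inr ⟨t, by rw [hvi, h2], by rw [hjt], hne⟩)
  · intro v hv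
    set i := e₁.symm v with hi
    have hvi : p i t = v := e₁.apply_symm_apply v
    have h1 : (e₁.symm.trans e₂) v = p i (t + 1) := rfl
    rw [h1] at hv ⊢
    rw [← hvi] at hv ⊢
    rcases ((hp.1 i).2.2.2 t) with h | h
    · exact h
    · exact (hv h.symm).elim

end MPPFormal
end
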